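/- arXiv:1912.10731 — 3 statements merged into one kernel-verified Lean document; each statement's English description precedes it below -/
import Mathlib

section
/- Let a be a C² vector field on U, let the Γ^k_{ij} be of class C¹, and let ψ ∈ C²(U). Then Λ(ψ) = Div²(ψ â) − Div(ψ ∇_a a) on U. -/
open scoped BigOperators

/-- Partial derivative in the `j`-th coordinate direction. -/
noncomputable def pd {d : ℕ} (j : Fin d) (f : (Fin d → ℝ) → ℝ) (x : Fin d → ℝ) : ℝ :=
  fderiv ℝ f x (Pi.single j 1)

/-- Divergence of a vector field relative to the Christoffel symbols `Γ`:
`DivVF X := ∂_j X^j + Γ^j_{kj} X^k`. -/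
noncomputable def DivVF {d : ℕ} (Γ : Fin d → Fin d → Fin d → (Fin d → ℝ) → ℝ)
    (X : Fin d → (Fin d → ℝ) → ℝ) (x : Fin d → ℝ) : ℝ :=
  (∑ j, pd j (X j) x) + ∑ k, ∑ j, Γ j k j x * X k x

/-- Divergence of a matrix field: `(DivMat S)^i := ∂_j S^{ij} + Γ^i_{lj} S^{lj} + Γ^j_{lj} S^{il}`. -/
noncomputable def DivMat {d : ℕ} (Γ : Fin d → Fin d → Fin d → (Fin d → ℝ) → ℝ)
    (S : Fin d → Fin d → (Fin d → ℝ) → ℝ) (i : Fin d) (x : Fin d → ℝ) : ℝ :=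
  (∑ j, pd j (S i j) x) + (∑ l, ∑ j, Γ i l j x * S l j x) + ∑ l, ∑ j, Γ j l j x * S i l x

/-- `(∇_a a)^l := a^m ∂_m a^l + Γ^l_{mk} a^m a^k`. -/
noncomputable def nablaSelf {d : ℕ} (Γ : Fin d → Fin d → Fin d → (Fin d → ℝ) → ℝ)
    (a : Fin d → (Fin d → ℝ) → ℝ) (l : Fin d) (x : Fin d → ℝ) : ℝ :=
  (∑ m, a m x * pd m (a l) x) + ∑ m, ∑ k, Γ l m k x * (a m x * a k x)

/-- The second order operator `Λ(ψ) := Div(Div(ψ a) a)`. -/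
noncomputable def Lam {d : ℕ} (Γ : Fin d → Fin d → Fin d → (Fin d → ℝ) → ℝ)
    (a : Fin d → (Fin d → ℝ) → ℝ) (ψ : (Fin d → ℝ) → ℝ) (x : Fin d → ℝ) : ℝ :=
  DivVF Γ (fun l y => DivVF Γ (fun j z => ψ z * a j z) y * a l y) x

lemma pd_mul {d : ℕ} {f g : (Fin d → ℝ) → ℝ} {x : Fin d → ℝ}
    (hf : DifferentiableAt ℝ f x) (hg : DifferentiableAt ℝ g x) (j : Fin d) :
    pd j (fun y => f y * g y) x = pd j f x * g x + f x * pd j g x := by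
  unfold pd
  rw [fderiv_fun_mul hf hg]
  simp only [ContinuousLinearMap.add_apply, ContinuousLinearMap.smul_apply, smul_eq_mul]
  ring

lemma pd_diffOn {d : ℕ} {U : Set (Fin d → ℝ)} (hU : IsOpen U) {f : (Fin d → ℝ) → ℝ}
    (hf : ContDiffOn ℝ 2 f U) (j : Fin d) :
    DifferentiableOn ℝ (fun y => pd j f y) U := by
  have h1 : ContDiffOn ℝ 1 (fun y => fderiv ℝ f y) U :=
    hf.fderiv_of_isOpen hU (by norm_num)
  exact (h1.clm_apply contDiffOn_const).differentiableOn one_ne_zero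

lemma DivVF_sub {d : ℕ} (Γ : Fin d → Fin d → Fin d → (Fin d → ℝ) → ℝ)
    (F G H : Fin d → (Fin d → ℝ) → ℝ) (x : Fin d → ℝ)
    (hFG : ∀ j, H j =ᶠ[nhds x] fun y => F j y - G j y)
    (hF : ∀ j, DifferentiableAt ℝ (F j) x) (hG : ∀ j, DifferentiableAt ℝ (G j) x) :
    DivVF Γ H x = DivVF Γ F x - DivVF Γ G x := by
  have hpd : ∀ j, pd j (H j) x = pd j (F j) x - pd j (G j) x := by
    intro j
    unfold pd
    rw [(hFG j).fderiv_eq, fderiv_fun_sub (hF j) (hG j)]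
    simp
  have hv : ∀ k, H k x = F k x - G k x := fun k => (hFG k).self_of_nhds
  unfold DivVF
  rw [Finset.sum_congr rfl fun j _ => hpd j, Finset.sum_sub_distrib]
  rw [Finset.sum_congr rfl fun k _ => Finset.sum_congr rfl fun j _ => by rw [hv k, mul_sub]]
  simp only [Finset.sum_sub_distrib]
  ring

/-- For a `C²` vector field `a`, `C¹` Christoffel symbols and `ψ ∈ C²(U)`:
`Λ(ψ) = Div²(ψ â) − Div(ψ ∇_a a)` on `U`, where `Div² S := Div(Div S)` and `â^{kl} = a^k a^l`. -/
theorem statement2 {d : ℕ} (U : Set (Fin d → ℝ)) (hU : IsOpen U)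
    (Γ : Fin d → Fin d → Fin d → (Fin d → ℝ) → ℝ)
    (hΓ : ∀ k i j, ContDiffOn ℝ 1 (Γ k i j) U)
    (a : Fin d → (Fin d → ℝ) → ℝ) (ha : ∀ l, ContDiffOn ℝ 2 (a l) U)
    (ψ : (Fin d → ℝ) → ℝ) (hψ : ContDiffOn ℝ 2 ψ U) :
    ∀ x ∈ U,
      Lam Γ a ψ x
        = DivVF Γ (fun i y => DivMat Γ (fun k l z => ψ z * (a k z * a l z)) i y) x
          - DivVF Γ (fun l y => ψ y * nablaSelf Γ a l y) x := by
  have hψd : ∀ y ∈ U, DifferentiableAt ℝ ψ y := fun y hy =>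
    ((hψ.differentiableOn (by norm_num)) y hy).differentiableAt (hU.mem_nhds hy)
  have had : ∀ l, ∀ y ∈ U, DifferentiableAt ℝ (a l) y := fun l y hy =>
    (((ha l).differentiableOn (by norm_num)) y hy).differentiableAt (hU.mem_nhds hy)
  have hΓd : ∀ k i j, ∀ y ∈ U, DifferentiableAt ℝ (Γ k i j) y := fun k i j y hy =>
    (((hΓ k i j).differentiableOn one_ne_zero) y hy).differentiableAt (hU.mem_nhds hy)
  have hpda : ∀ l m, ∀ y ∈ U, DifferentiableAt ℝ (fun z => pd m (a l) z) y := fun l m y hy =>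
    ((pd_diffOn hU (ha l) m) y hy).differentiableAt (hU.mem_nhds hy)
  have hSd : ∀ i j, ∀ y ∈ U,
      DifferentiableAt ℝ (fun z => pd j (fun w => ψ w * (a i w * a j w)) z) y := fun i j y hy =>
    ((pd_diffOn hU (hψ.mul ((ha i).mul (ha j))) j) y hy).differentiableAt (hU.mem_nhds hy)
  -- the key pointwise identity on U
  have key : ∀ i : Fin d, ∀ y ∈ U,
      DivVF Γ (fun j z => ψ z * a j z) y * a i y
        = DivMat Γ (fun k l z => ψ z * (a k z * a l z)) i y
          - ψ y * nablaSelf Γ a i y := by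
    intro i y hy
    simp only [DivVF, DivMat, nablaSelf]
    have hpd : ∀ j : Fin d, pd j (fun z => ψ z * (a i z * a j z)) y
        = pd j (fun z => ψ z * a j z) y * a i y + ψ y * a j y * pd j (a i) y := by
      intro j
      have hfe : (fun z => ψ z * (a i z * a j z)) = fun z => (ψ z * a j z) * a i z := by
        funext z; ring
      rw [hfe, pd_mul ((hψd y hy).fun_mul (had j y hy)) (had i y hy)]
    rw [Finset.sum_congr rfl (fun j _ => hpd j), Finset.sum_add_distrib, ← Finset.sum_mul]
    have e1 : ∑ j : Fin d, ψ y * a j y * pd j (a i) y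
        = ψ y * ∑ m : Fin d, a m y * pd m (a i) y := by
      rw [Finset.mul_sum]; exact Finset.sum_congr rfl fun j _ => by ring
    have e2 : ∑ l : Fin d, ∑ j : Fin d, Γ i l j y * (ψ y * (a l y * a j y))
        = ψ y * ∑ m : Fin d, ∑ k : Fin d, Γ i m k y * (a m y * a k y) := by
      rw [Finset.mul_sum]
      refine Finset.sum_congr rfl fun l _ => ?_
      rw [Finset.mul_sum]; exact Finset.sum_congr rfl fun j _ => by ring
    have e3 : ∑ l : Fin d, ∑ j : Fin d, Γ j l j y * (ψ y * (a i y * a l y))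
        = (∑ k : Fin d, ∑ j : Fin d, Γ j k j y * (ψ y * a k y)) * a i y := by
      rw [Finset.sum_mul]
      refine Finset.sum_congr rfl fun l _ => ?_
      rw [Finset.sum_mul]; exact Finset.sum_congr rfl fun j _ => by ring
    rw [e1, e2, e3]
    ring
  intro x hx
  have hmem := hU.mem_nhds hx
  have hF : ∀ i, DifferentiableAt ℝ
      (fun y => DivMat Γ (fun k l z => ψ z * (a k z * a l z)) i y) x := by
    intro i
    simp only [DivMat]
    refine DifferentiableAt.add (DifferentiableAt.add ?_ ?_) ?_
    · exact DifferentiableAt.fun_sum fun j _ => hSd i j x hx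
    · exact DifferentiableAt.fun_sum fun l _ => DifferentiableAt.fun_sum fun j _ =>
        (hΓd i l j x hx).mul ((hψd x hx).mul ((had l x hx).mul (had j x hx)))
    · exact DifferentiableAt.fun_sum fun l _ => DifferentiableAt.fun_sum fun j _ =>
        (hΓd j l j x hx).mul ((hψd x hx).mul ((had i x hx).mul (had l x hx)))
  have hG : ∀ i, DifferentiableAt ℝ (fun y => ψ y * nablaSelf Γ a i y) x := by
    intro i
    simp only [nablaSelf]
    refine (hψd x hx).mul (DifferentiableAt.add ?_ ?_)
    · exact DifferentiableAt.fun_sum fun m _ => (had m x hx).mul (hpda i m x hx)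
    · exact DifferentiableAt.fun_sum fun m _ => DifferentiableAt.fun_sum fun k _ =>
        (hΓd i m k x hx).mul ((had m x hx).mul (had k x hx))
  have hEq : ∀ i : Fin d,
      (fun y => DivVF Γ (fun j z => ψ z * a j z) y * a i y) =ᶠ[nhds x]
      (fun y => DivMat Γ (fun k l z => ψ z * (a k z * a l z)) i y
        - ψ y * nablaSelf Γ a i y) := by
    intro i
    filter_upwards [hmem] with y hy using key i y hy
  unfold Lam
  exact DivVF_sub Γ _ _ _ x hEq hF hG
end

section
/- Fix q ∈ [1,∞) and T > 0, let (Y,ν) be a finite measure space, and let H : ℝ → ℝ be continuous and bounded. Let f_j, f : [0,T] × Y → ℝ be jointly measurable with f_j(t,·), f(t,·) ∈ L²(ν) for a.e. t ∈ [0,T], t ↦ ‖f_j(t,·)‖_{L²(ν)} and t ↦ ‖f(t,·)‖_{L²(ν)} in L^q([0,T]), and suppose ∫₀^T ‖f_j(t,·) − f(t,·)‖_{L²(ν)}^q dt → 0 as j → ∞. Then ∫₀^T ‖H(f_j(t,·)) f_j(t,·) − H(f(t,·)) f(t,·)‖_{L²(ν)}^q dt → 0 as j → ∞. -/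
open MeasureTheory Filter
open scoped ENNReal Topology
open scoped NNReal

-- helper: rpow of tendsto-to-zero
lemma tendsto_rpow_zero' {ι : Type*} {l : Filter ι} {u : ι → ℝ≥0∞} {c : ℝ} (hc : 0 < c)
    (h : Tendsto u l (𝓝 0)) : Tendsto (fun n => u n ^ c) l (𝓝 0) := by
  have := ((ENNReal.continuous_rpow_const (y := c)).tendsto (0 : ℝ≥0∞)).comp h
  simpa [Function.comp_def, ENNReal.zero_rpow_of_pos hc] using this

-- Lemma A : subsequence extraction
lemma lemA {X : Type*} [MeasurableSpace X] {μ : Measure X} {w : ℕ → X → ℝ≥0∞}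
    (hm : ∀ j, AEMeasurable (w j) μ)
    (h : Tendsto (fun j => ∫⁻ x, w j x ∂μ) atTop (𝓝 0)) :
    ∃ φ : ℕ → ℕ, StrictMono φ ∧ (∫⁻ x, ∑' k, w (φ k) x ∂μ) < ⊤ ∧
      ∀ᵐ x ∂μ, Tendsto (fun k => w (φ k) x) atTop (𝓝 0) := by
  have hpos : ∀ n : ℕ, (0:ℝ≥0∞) < 2⁻¹ ^ n := fun n =>
    ENNReal.pow_pos (ENNReal.inv_pos.mpr ENNReal.ofNat_ne_top) n
  have hev : ∀ n : ℕ, ∀ᶠ j in atTop, ∫⁻ x, w j x ∂μ < 2⁻¹ ^ n := fun n =>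
    h (Iio_mem_nhds (hpos n))
  obtain ⟨φ, hφmono, hφ⟩ := Filter.extraction_forall_of_eventually hev
  have hsum : (∫⁻ x, ∑' k, w (φ k) x ∂μ) < ⊤ := by
    rw [lintegral_tsum (fun k => hm (φ k))]
    calc ∑' k, ∫⁻ x, w (φ k) x ∂μ ≤ ∑' k : ℕ, (2⁻¹:ℝ≥0∞) ^ k :=
          ENNReal.tsum_le_tsum fun k => (hφ k).le
      _ = (1 - 2⁻¹)⁻¹ := ENNReal.tsum_geometric 2⁻¹
      _ < ⊤ := by simp [ENNReal.one_sub_inv_two]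
  refine ⟨φ, hφmono, hsum, ?_⟩
  have hae : ∀ᵐ x ∂μ, (∑' k, w (φ k) x) < ⊤ :=
    ae_lt_top' (AEMeasurable.ennreal_tsum fun k => hm (φ k)) hsum.ne
  filter_upwards [hae] with x hx
  exact ENNReal.tendsto_atTop_zero_of_tsum_ne_top hx.ne

-- Lemma B : generalized dominated convergence schema
lemma lemB {X : Type*} [MeasurableSpace X] {μ : Measure X} {w v : ℕ → X → ℝ≥0∞}
    (hwm : ∀ j, AEMeasurable (w j) μ) (hvm : ∀ j, AEMeasurable (v j) μ)
    {c : ℝ≥0∞} (hc : c ≠ ⊤) {g₀ : X → ℝ≥0∞} (hg₀m : AEMeasurable g₀ μ)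
    (hg₀ : ∫⁻ x, g₀ x ∂μ < ⊤)
    (hdom : ∀ j, ∀ᵐ x ∂μ, v j x ≤ c * (w j x + g₀ x))
    (hw : Tendsto (fun j => ∫⁻ x, w j x ∂μ) atTop (𝓝 0))
    (hpt : ∀ᵐ x ∂μ, ∀ φ : ℕ → ℕ, Tendsto (fun k => w (φ k) x) atTop (𝓝 0) →
        Tendsto (fun k => v (φ k) x) atTop (𝓝 0)) :
    Tendsto (fun j => ∫⁻ x, v j x ∂μ) atTop (𝓝 0) := by
  refine tendsto_of_subseq_tendsto fun ns hns => ?_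
  obtain ⟨φ, hφmono, hS, hae⟩ := lemA (fun k => hwm (ns k)) (hw.comp hns)
  refine ⟨φ, ?_⟩
  have h0 : (0:ℝ≥0∞) = ∫⁻ x, (0:ℝ≥0∞) ∂μ := by simp
  rw [h0]
  refine tendsto_lintegral_of_dominated_convergence'
    (fun x => c * ((∑' k, w (ns (φ k)) x) + g₀ x))
    (fun k => hvm (ns (φ k))) ?_ ?_ ?_
  · intro k
    filter_upwards [hdom (ns (φ k))] with x hx
    exact hx.trans (mul_le_mul_right (add_le_add_left (ENNReal.le_tsum k) _) c)
  · rw [lintegral_const_mul'' (f := fun x => ∑' k, w (ns (φ k)) x + g₀ x) _ ((AEMeasurable.ennreal_tsum fun k => hwm (ns (φ k))).add hg₀m),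
      lintegral_add_left' (AEMeasurable.ennreal_tsum fun k => hwm (ns (φ k))) _]
    exact (ENNReal.mul_lt_top hc.lt_top (ENNReal.add_lt_top.mpr ⟨hS, hg₀⟩)).ne
  · filter_upwards [hae, hpt] with x hx hpx
    exact hpx (fun k => ns (φ k)) hx


-- pointwise bound
lemma key_abs_ineq (H : ℝ → ℝ) (Cb : ℝ) (hHb : ∀ t : ℝ, |H t| ≤ Cb) (a b : ℝ) :
    |H a * a - H b * b| ≤ Cb * |a - b| + 2 * Cb * |b| := by
  have h1 : H a * a - H b * b = H a * (a - b) + (H a - H b) * b := by ring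
  have h2 : |H a * (a - b) + (H a - H b) * b| ≤ |H a| * |a - b| + |H a - H b| * |b| := by
    calc _ ≤ |H a * (a - b)| + |(H a - H b) * b| := abs_add_le _ _
      _ = |H a| * |a - b| + |H a - H b| * |b| := by rw [abs_mul, abs_mul]
  have h3 : |H a - H b| ≤ 2 * Cb := by
    calc |H a - H b| ≤ |H a| + |H b| := abs_sub _ _
      _ ≤ Cb + Cb := add_le_add (hHb a) (hHb b)
      _ = 2 * Cb := by ring
  have := abs_nonneg (a - b); have := abs_nonneg b; have := abs_nonneg (H a)
  rw [h1]
  calc |H a * (a - b) + (H a - H b) * b| ≤ |H a| * |a - b| + |H a - H b| * |b| := h2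
    _ ≤ Cb * |a - b| + 2 * Cb * |b| := by
        exact add_le_add (mul_le_mul_of_nonneg_right (hHb a) (abs_nonneg _))
          (mul_le_mul_of_nonneg_right h3 (abs_nonneg _))

lemma sq_enorm_eq (x : ℝ) : (‖x‖₊ : ℝ≥0∞) ^ (2:ℝ) = ENNReal.ofReal (|x| ^ 2) := by
  rw [← enorm_eq_nnnorm, Real.enorm_eq_ofReal_abs, ENNReal.ofReal_rpow_of_nonneg (abs_nonneg x) (by norm_num)]
  congr 1
  rw [show ((2:ℝ)) = ((2:ℕ):ℝ) by norm_num, Real.rpow_natCast]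

lemma key_sq_ineq (H : ℝ → ℝ) (Cb : ℝ) (hHb : ∀ t : ℝ, |H t| ≤ Cb) (a b : ℝ) :
    (‖H a * a - H b * b‖₊ : ℝ≥0∞) ^ (2:ℝ) ≤
      ENNReal.ofReal (8 * (Cb ^ 2 + 1)) *
        ((‖a - b‖₊ : ℝ≥0∞) ^ (2:ℝ) + (‖b‖₊ : ℝ≥0∞) ^ (2:ℝ)) := by
  rw [sq_enorm_eq, sq_enorm_eq, sq_enorm_eq, ← ENNReal.ofReal_add (by positivity) (by positivity),
    ← ENNReal.ofReal_mul (by positivity)]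
  refine ENNReal.ofReal_le_ofReal ?_
  have h := key_abs_ineq H Cb hHb a b
  have hCb : 0 ≤ Cb := le_trans (abs_nonneg _) (hHb 0)
  have habs : 0 ≤ |H a * a - H b * b| := abs_nonneg _
  nlinarith [sq_nonneg (|a-b| - |b|), sq_nonneg (Cb * |a-b| + 2*Cb*|b|), abs_nonneg (a-b),
    abs_nonneg b, sq_abs (H a * a - H b * b), sq_abs (a-b), sq_abs b,
    mul_nonneg (abs_nonneg (a-b)) (abs_nonneg b)]

lemma nemytskii_L2 {Y : Type*} [MeasurableSpace Y] (ν : Measure Y)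
    (H : ℝ → ℝ) (hH : Continuous H) (Cb : ℝ) (hHb : ∀ t : ℝ, |H t| ≤ Cb)
    (u : ℕ → Y → ℝ) (l : Y → ℝ) (hum : ∀ k, AEMeasurable (u k) ν) (hlm : AEMeasurable l ν)
    (hl2 : ∫⁻ y, (‖l y‖₊ : ℝ≥0∞) ^ (2:ℝ) ∂ν < ⊤)
    (hconv : Tendsto (fun k => ∫⁻ y, (‖u k y - l y‖₊ : ℝ≥0∞) ^ (2:ℝ) ∂ν) atTop (𝓝 0)) :
    Tendsto (fun k => ∫⁻ y, (‖H (u k y) * u k y - H (l y) * l y‖₊ : ℝ≥0∞) ^ (2:ℝ) ∂ν)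
      atTop (𝓝 0) := by
  have hwm : ∀ k, AEMeasurable (fun y => (‖u k y - l y‖₊ : ℝ≥0∞) ^ (2:ℝ)) ν :=
    fun k => (((hum k).sub hlm).nnnorm.coe_nnreal_ennreal).pow aemeasurable_const
  have hvm : ∀ k, AEMeasurable
      (fun y => (‖H (u k y) * u k y - H (l y) * l y‖₊ : ℝ≥0∞) ^ (2:ℝ)) ν := fun k =>
    (((((hH.measurable.comp_aemeasurable (hum k)).mul (hum k)).sub
      ((hH.measurable.comp_aemeasurable hlm).mul hlm)).nnnorm.coe_nnreal_ennreal)).pow aemeasurable_const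
  refine lemB hwm hvm (c := ENNReal.ofReal (8 * (Cb ^ 2 + 1))) ENNReal.ofReal_ne_top
    ((hlm.nnnorm.coe_nnreal_ennreal).pow aemeasurable_const) hl2 ?_ hconv ?_
  · intro k
    exact ae_of_all _ fun y => key_sq_ineq H Cb hHb (u k y) (l y)
  · refine ae_of_all _ fun y φ h0 => ?_
    -- from h0 : ‖u (φ k) y - l y‖₊ ^ 2 → 0 deduce u (φ k) y → l y
    have h1 : Tendsto (fun k => (‖u (φ k) y - l y‖₊ : ℝ≥0∞)) atTop (𝓝 0) := by
      have := tendsto_rpow_zero' (c := (2:ℝ)⁻¹) (by norm_num) h0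
      have heq : ∀ k, ((‖u (φ k) y - l y‖₊ : ℝ≥0∞) ^ (2:ℝ)) ^ ((2:ℝ)⁻¹)
          = (‖u (φ k) y - l y‖₊ : ℝ≥0∞) := by
        intro k
        rw [← ENNReal.rpow_mul]
        norm_num
      exact this.congr heq
    have h2 : Tendsto (fun k => u (φ k) y) atTop (𝓝 (l y)) := by
      rw [← tendsto_sub_nhds_zero_iff, tendsto_zero_iff_norm_tendsto_zero]
      have h1' : Tendsto (fun k => (‖u (φ k) y - l y‖₊ : ℝ≥0)) atTop (𝓝 0) := by
        have h := ENNReal.tendsto_coe (f := atTop) (m := fun k => ‖u (φ k) y - l y‖₊)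
          (a := 0)
        rw [ENNReal.coe_zero] at h
        exact h.mp h1
      have h1'' : Tendsto (fun k => ((‖u (φ k) y - l y‖₊ : ℝ≥0) : ℝ)) atTop (𝓝 (0:ℝ)) := by
        have h := NNReal.tendsto_coe (f := atTop) (m := fun k => ‖u (φ k) y - l y‖₊)
          (x := 0)
        rw [NNReal.coe_zero] at h
        exact h.mpr h1'
      simpa [coe_nnnorm] using h1'' 
    have h3 : Tendsto (fun k => H (u (φ k) y) * u (φ k) y - H (l y) * l y) atTop (𝓝 0) := by
      have := ((hH.tendsto (l y)).comp h2).mul h2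
      have h4 := this.sub (tendsto_const_nhds (x := H (l y) * l y))
      simpa using h4
    have h4 : Tendsto (fun k => ‖H (u (φ k) y) * u (φ k) y - H (l y) * l y‖) atTop (𝓝 0) :=
      tendsto_zero_iff_norm_tendsto_zero.mp h3
    have h5' : Tendsto (fun k => (‖H (u (φ k) y) * u (φ k) y - H (l y) * l y‖₊ : ℝ≥0))
        atTop (𝓝 0) := by
      have h : Tendsto (fun k => ((‖H (u (φ k) y) * u (φ k) y - H (l y) * l y‖₊ : ℝ≥0) : ℝ))
          atTop (𝓝 (0:ℝ)) := by simpa [coe_nnnorm] using h4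
      have h' := NNReal.tendsto_coe (f := atTop)
        (m := fun k => ‖H (u (φ k) y) * u (φ k) y - H (l y) * l y‖₊) (x := 0)
      rw [NNReal.coe_zero] at h'
      exact h'.mp h
    have h5 : Tendsto (fun k => (‖H (u (φ k) y) * u (φ k) y - H (l y) * l y‖₊ : ℝ≥0∞))
        atTop (𝓝 0) := by
      have h := ENNReal.tendsto_coe (f := atTop)
        (m := fun k => ‖H (u (φ k) y) * u (φ k) y - H (l y) * l y‖₊) (a := 0)
      rw [ENNReal.coe_zero] at h
      exact h.mpr h5'
    exact tendsto_rpow_zero' (by norm_num) h5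

lemma eLpNorm_two_eq {Y : Type*} [MeasurableSpace Y] (ν : Measure Y) (g : Y → ℝ) :
    eLpNorm g 2 ν = (∫⁻ y, (‖g y‖₊ : ℝ≥0∞) ^ (2:ℝ) ∂ν) ^ ((2:ℝ)⁻¹) := by
  rw [eLpNorm_eq_lintegral_rpow_enorm_toReal two_ne_zero ENNReal.ofNat_ne_top]
  norm_num [enorm_eq_nnnorm]

lemma meas_eLpNorm_q {Y : Type*} [MeasurableSpace Y] (ν : Measure Y) [SFinite ν]
    {g : ℝ × Y → ℝ} (hg : Measurable g) (q : ℝ) :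
    Measurable fun t => eLpNorm (fun y => g (t, y)) 2 ν ^ q := by
  have h1 : Measurable fun t => ∫⁻ y, (‖g (t, y)‖₊ : ℝ≥0∞) ^ (2:ℝ) ∂ν :=
    (hg.nnnorm.coe_nnreal_ennreal.pow measurable_const).lintegral_prod_right'
  have heq : (fun t => eLpNorm (fun y => g (t, y)) 2 ν ^ q)
      = fun t => ((∫⁻ y, (‖g (t, y)‖₊ : ℝ≥0∞) ^ (2:ℝ) ∂ν) ^ ((2:ℝ)⁻¹)) ^ q := by
    funext t; rw [eLpNorm_two_eq]
  rw [heq]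
  exact (h1.pow measurable_const).pow measurable_const

lemma rpow_add_le_two_rpow (A B : ℝ≥0∞) {q : ℝ} (hq : 0 ≤ q) :
    (A + B) ^ q ≤ 2 ^ q * (A ^ q + B ^ q) := by
  have h1 : A + B ≤ 2 * (A ⊔ B) := by
    rw [two_mul]
    exact add_le_add le_sup_left le_sup_right
  calc (A + B) ^ q ≤ (2 * (A ⊔ B)) ^ q := ENNReal.rpow_le_rpow h1 hq
    _ = 2 ^ q * (A ⊔ B) ^ q := ENNReal.mul_rpow_of_nonneg _ _ hq
    _ ≤ 2 ^ q * (A ^ q + B ^ q) := by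
        refine mul_le_mul_right ?_ _
        rcases le_total A B with h | h
        · rw [sup_eq_right.mpr h]; exact le_add_self
        · rw [sup_eq_left.mpr h]; exact le_self_add

lemma eLpNorm_nemytskii_bound {Y : Type*} [MeasurableSpace Y] (ν : Measure Y)
    (H : ℝ → ℝ) (Cb : ℝ) (hHb : ∀ t : ℝ, |H t| ≤ Cb)
    {u l : Y → ℝ} (hu : AEStronglyMeasurable u ν) (hl : AEStronglyMeasurable l ν) :
    eLpNorm (fun y => H (u y) * u y - H (l y) * l y) 2 ν ≤
      ENNReal.ofReal Cb * eLpNorm (fun y => u y - l y) 2 ν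
        + ENNReal.ofReal (2 * Cb) * eLpNorm l 2 ν := by
  have hCb : 0 ≤ Cb := le_trans (abs_nonneg _) (hHb 0)
  have step1 : eLpNorm (fun y => H (u y) * u y - H (l y) * l y) 2 ν ≤
      eLpNorm (fun y => Cb * |u y - l y| + 2 * Cb * |l y|) 2 ν := by
    refine eLpNorm_mono fun y => ?_
    rw [Real.norm_eq_abs, Real.norm_eq_abs,
      abs_of_nonneg (by positivity : (0:ℝ) ≤ Cb * |u y - l y| + 2 * Cb * |l y|)]
    exact key_abs_ineq H Cb hHb (u y) (l y)
  have hm1 : AEStronglyMeasurable (fun y => Cb * |u y - l y|) ν :=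
    ((hu.sub hl).norm.const_mul Cb).congr (by filter_upwards with y; simp [Real.norm_eq_abs])
  have hm2 : AEStronglyMeasurable (fun y => 2 * Cb * |l y|) ν :=
    (hl.norm.const_mul (2 * Cb)).congr (by filter_upwards with y; simp [Real.norm_eq_abs])
  have step2 : eLpNorm (fun y => Cb * |u y - l y| + 2 * Cb * |l y|) 2 ν ≤
      eLpNorm (fun y => Cb * |u y - l y|) 2 ν + eLpNorm (fun y => 2 * Cb * |l y|) 2 ν :=
    eLpNorm_add_le hm1 hm2 (by norm_num)
  have e1 : eLpNorm (fun y => Cb * |u y - l y|) 2 ν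
      = ENNReal.ofReal Cb * eLpNorm (fun y => u y - l y) 2 ν := by
    have : (fun y => Cb * |u y - l y|) = Cb • fun y => ‖u y - l y‖ := by
      funext y; simp [Real.norm_eq_abs]
    rw [this, eLpNorm_const_smul, eLpNorm_norm, Real.enorm_eq_ofReal hCb]
  have e2 : eLpNorm (fun y => 2 * Cb * |l y|) 2 ν
      = ENNReal.ofReal (2 * Cb) * eLpNorm l 2 ν := by
    have : (fun y => 2 * Cb * |l y|) = (2 * Cb) • fun y => ‖l y‖ := by
      funext y; simp [Real.norm_eq_abs]
    rw [this, eLpNorm_const_smul, eLpNorm_norm,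
      Real.enorm_eq_ofReal (by positivity)]
  calc _ ≤ _ := step1
    _ ≤ _ := step2
    _ = _ := by rw [e1, e2]

/-- Fix `q ∈ [1,∞)`, `T > 0`, a finite measure space `(Y,ν)` and a
continuous bounded `H : ℝ → ℝ`. If `f_j, f : [0,T] × Y → ℝ` are jointly measurable,
with `f_j(t,·), f(t,·) ∈ L²(ν)` for a.e. `t`, `t ↦ ‖f_j(t,·)‖_{L²}` and
`t ↦ ‖f(t,·)‖_{L²}` in `L^q([0,T])`, and `∫₀^T ‖f_j(t,·) − f(t,·)‖_{L²}^q dt → 0`,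
then `∫₀^T ‖H(f_j(t,·)) f_j(t,·) − H(f(t,·)) f(t,·)‖_{L²}^q dt → 0`. -/
theorem statement14 {Y : Type*} [MeasurableSpace Y] (ν : Measure Y) [IsFiniteMeasure ν]
    (q : ℝ) (hq : 1 ≤ q) (T : ℝ) (hT : 0 < T)
    (H : ℝ → ℝ) (hH : Continuous H) (Cb : ℝ) (hHb : ∀ t : ℝ, |H t| ≤ Cb)
    (f : ℕ → ℝ → Y → ℝ) (flim : ℝ → Y → ℝ)
    (hmeas : ∀ j, Measurable fun p : ℝ × Y => f j p.1 p.2)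
    (hmeaslim : Measurable fun p : ℝ × Y => flim p.1 p.2)
    (hf2 : ∀ j, ∀ᵐ t ∂(volume.restrict (Set.Icc (0 : ℝ) T)), MemLp (f j t) 2 ν)
    (hflim2 : ∀ᵐ t ∂(volume.restrict (Set.Icc (0 : ℝ) T)), MemLp (flim t) 2 ν)
    (hfq : ∀ j, (∫⁻ t in Set.Icc (0 : ℝ) T, eLpNorm (f j t) 2 ν ^ q) < ⊤)
    (hflimq : (∫⁻ t in Set.Icc (0 : ℝ) T, eLpNorm (flim t) 2 ν ^ q) < ⊤)
    (hconv : Tendsto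
      (fun j => ∫⁻ t in Set.Icc (0 : ℝ) T,
        eLpNorm (fun y => f j t y - flim t y) 2 ν ^ q) atTop (𝓝 0)) :
    Tendsto
      (fun j => ∫⁻ t in Set.Icc (0 : ℝ) T,
        eLpNorm (fun y => H (f j t y) * f j t y - H (flim t y) * flim t y) 2 ν ^ q)
      atTop (𝓝 0) := by
  have hq0 : (0:ℝ) < q := lt_of_lt_of_le one_pos hq
  have hqne : q ≠ 0 := hq0.ne'
  have hCb : 0 ≤ Cb := le_trans (abs_nonneg _) (hHb 0)
  set μ := volume.restrict (Set.Icc (0 : ℝ) T) with hμ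
  set w : ℕ → ℝ → ℝ≥0∞ := fun j t => eLpNorm (fun y => f j t y - flim t y) 2 ν ^ q with hw
  set v : ℕ → ℝ → ℝ≥0∞ := fun j t =>
    eLpNorm (fun y => H (f j t y) * f j t y - H (flim t y) * flim t y) 2 ν ^ q with hv
  set g₀ : ℝ → ℝ≥0∞ := fun t => eLpNorm (flim t) 2 ν ^ q with hg₀def
  have hwm : ∀ j, AEMeasurable (w j) μ := fun j =>
    (meas_eLpNorm_q ν ((hmeas j).sub hmeaslim) q).aemeasurable
  have hvm : ∀ j, AEMeasurable (v j) μ := fun j =>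
    (meas_eLpNorm_q ν
      (((hH.measurable.comp (hmeas j)).mul (hmeas j)).sub
        ((hH.measurable.comp hmeaslim).mul hmeaslim)) q).aemeasurable
  have hg₀m : AEMeasurable g₀ μ := (meas_eLpNorm_q ν hmeaslim q).aemeasurable
  set K : ℝ≥0∞ := ENNReal.ofReal Cb + ENNReal.ofReal (2 * Cb) with hK
  have hKne : K ≠ ⊤ := by simp [hK, ENNReal.mul_eq_top]
  set c : ℝ≥0∞ := K ^ q * 2 ^ q with hc
  have hcne : c ≠ ⊤ := by
    refine ENNReal.mul_ne_top ?_ ?_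
    · exact (ENNReal.rpow_lt_top_of_nonneg hq0.le hKne).ne
    · exact (ENNReal.rpow_lt_top_of_nonneg hq0.le (by norm_num)).ne
  have hdom : ∀ j, ∀ᵐ t ∂μ, v j t ≤ c * (w j t + g₀ t) := by
    intro j
    filter_upwards [hf2 j, hflim2] with t h1 h2
    have hb := eLpNorm_nemytskii_bound ν H Cb hHb
      h1.aestronglyMeasurable h2.aestronglyMeasurable
    have hb2 : eLpNorm (fun y => H (f j t y) * f j t y - H (flim t y) * flim t y) 2 ν ≤
        K * (eLpNorm (fun y => f j t y - flim t y) 2 ν + eLpNorm (flim t) 2 ν) := by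
      refine hb.trans ?_
      rw [mul_add]
      rw [hK]
      exact add_le_add (mul_le_mul_left le_self_add _) (mul_le_mul_left le_add_self _)
    calc v j t ≤ (K * (eLpNorm (fun y => f j t y - flim t y) 2 ν + eLpNorm (flim t) 2 ν)) ^ q :=
          ENNReal.rpow_le_rpow hb2 hq0.le
      _ = K ^ q * (eLpNorm (fun y => f j t y - flim t y) 2 ν + eLpNorm (flim t) 2 ν) ^ q :=
          ENNReal.mul_rpow_of_nonneg _ _ hq0.le
      _ ≤ K ^ q * (2 ^ q * (w j t + g₀ t)) := by
          exact mul_le_mul_right (rpow_add_le_two_rpow _ _ hq0.le) _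
      _ = c * (w j t + g₀ t) := by rw [hc, mul_assoc]
  have hpt : ∀ᵐ t ∂μ, ∀ φ : ℕ → ℕ, Tendsto (fun k => w (φ k) t) atTop (𝓝 0) →
      Tendsto (fun k => v (φ k) t) atTop (𝓝 0) := by
    filter_upwards [ae_all_iff.mpr hf2, hflim2] with t h1 h2 φ hw0
    -- eLpNorm of differences tends to 0
    have hA : Tendsto (fun k => eLpNorm (fun y => f (φ k) t y - flim t y) 2 ν) atTop (𝓝 0) := by
      have := tendsto_rpow_zero' (inv_pos.mpr hq0) hw0
      refine this.congr fun k => ?_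
      rw [← ENNReal.rpow_mul, mul_inv_cancel₀ hqne, ENNReal.rpow_one]
    have hI : Tendsto (fun k => ∫⁻ y, (‖f (φ k) t y - flim t y‖₊ : ℝ≥0∞) ^ (2:ℝ) ∂ν)
        atTop (𝓝 0) := by
      have := tendsto_rpow_zero' (c := (2:ℝ)) (by norm_num) hA
      refine this.congr fun k => ?_
      rw [eLpNorm_two_eq, ← ENNReal.rpow_mul]
      norm_num
    have hl2 : ∫⁻ y, (‖flim t y‖₊ : ℝ≥0∞) ^ (2:ℝ) ∂ν < ⊤ := by
      have he : ∫⁻ y, (‖flim t y‖₊ : ℝ≥0∞) ^ (2:ℝ) ∂ν = (eLpNorm (flim t) 2 ν) ^ (2:ℝ) := by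
        rw [eLpNorm_two_eq, ← ENNReal.rpow_mul]
        norm_num
      rw [he]
      exact ENNReal.rpow_lt_top_of_nonneg (by norm_num) h2.2.ne
    have hJ := nemytskii_L2 ν H hH Cb hHb (fun k => f (φ k) t) (flim t)
      (fun k => (h1 (φ k)).aestronglyMeasurable.aemeasurable)
      h2.aestronglyMeasurable.aemeasurable hl2 hI
    have hE : Tendsto (fun k =>
        eLpNorm (fun y => H (f (φ k) t y) * f (φ k) t y - H (flim t y) * flim t y) 2 ν)
        atTop (𝓝 0) := by
      have := tendsto_rpow_zero' (c := (2:ℝ)⁻¹) (by norm_num) hJ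
      refine this.congr fun k => ?_
      rw [eLpNorm_two_eq]
    exact tendsto_rpow_zero' hq0 hE
  exact lemB hwm hvm hcne hg₀m hflimq hdom hconv hpt
end

section
/- There exists a constant C_χ, depending only on χ and not on μ, such that for all μ > 0 and all ξ ∈ ℝ: |G_{F_μ}(ξ)| ≤ C_χ F_μ(ξ); |ξ² F_μ''(ξ)| ≤ C_χ F_μ(ξ) whenever |ξ| ≤ √μ; |ξ² F_μ''(ξ)| ≤ C_χ ξ² whenever √μ ≤ |ξ| ≤ √(2μ); and ξ² F_μ''(ξ) = 0 whenever |ξ| > √(2μ). -/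
open Filter
open scoped Topology

/-- With `F_μ(ξ) := μ χ(ξ²/μ)` and `G_{F_μ}(ξ) := ξ F_μ'(ξ) − F_μ(ξ)`,
there is a constant `C_χ` depending only on `χ` (not on `μ`) such that for all `μ > 0`
and `ξ ∈ ℝ`: `|G_{F_μ}(ξ)| ≤ C_χ F_μ(ξ)`; `|ξ² F_μ''(ξ)| ≤ C_χ F_μ(ξ)` when `|ξ| ≤ √μ`;
`|ξ² F_μ''(ξ)| ≤ C_χ ξ²` when `√μ ≤ |ξ| ≤ √(2μ)`; and `ξ² F_μ''(ξ) = 0` when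
`|ξ| > √(2μ)`. -/
theorem statement19 (χ : ℝ → ℝ) (hχ : ContDiff ℝ (⊤ : ℕ∞) χ)
    (hχ' : ∀ ξ : ℝ, 0 ≤ ξ → 0 ≤ deriv χ ξ)
    (hχid : ∀ ξ ∈ Set.Icc (0 : ℝ) 1, χ ξ = ξ)
    (hχ2 : ∀ ξ : ℝ, 2 ≤ ξ → χ ξ = 2)
    (hχmid : ∀ ξ ∈ Set.Ioo (1 : ℝ) 2, χ ξ ∈ Set.Ioo (1 : ℝ) 2) :
    ∃ C : ℝ, ∀ μ : ℝ, 0 < μ → ∀ ξ : ℝ,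
      |ξ * deriv (fun t : ℝ => μ * χ (t ^ 2 / μ)) ξ - μ * χ (ξ ^ 2 / μ)|
          ≤ C * (μ * χ (ξ ^ 2 / μ)) ∧
      (|ξ| ≤ Real.sqrt μ →
        |ξ ^ 2 * deriv (deriv (fun t : ℝ => μ * χ (t ^ 2 / μ))) ξ|
          ≤ C * (μ * χ (ξ ^ 2 / μ))) ∧
      (Real.sqrt μ ≤ |ξ| → |ξ| ≤ Real.sqrt (2 * μ) →
        |ξ ^ 2 * deriv (deriv (fun t : ℝ => μ * χ (t ^ 2 / μ))) ξ| ≤ C * ξ ^ 2) ∧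
      (Real.sqrt (2 * μ) < |ξ| →
        ξ ^ 2 * deriv (deriv (fun t : ℝ => μ * χ (t ^ 2 / μ))) ξ = 0) := by
  -- basic regularity facts
  have hχ1 : ContDiff ℝ (⊤ : ℕ∞) (deriv χ) := hχ.iterate_deriv 1
  have hdχ : ∀ x : ℝ, HasDerivAt χ (deriv χ x) x :=
    fun x => (hχ.differentiable (by simp) x).hasDerivAt
  have hdχ2 : ∀ x : ℝ, HasDerivAt (deriv χ) (deriv (deriv χ) x) x :=
    fun x => (hχ1.differentiable (by simp) x).hasDerivAt
  have hcont1 : Continuous (deriv χ) := hχ1.continuous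
  have hcont2 : Continuous (deriv (deriv χ)) := (hχ1.iterate_deriv 1).continuous
  -- deriv χ = 1 on [0,1]
  have h1o : ∀ u ∈ Set.Ioo (0:ℝ) 1, deriv χ u = 1 := by
    intro u hu
    have hev : χ =ᶠ[𝓝 u] (fun x => x) := by
      filter_upwards [isOpen_Ioo.mem_nhds hu] with x hx
      exact hχid x ⟨hx.1.le, hx.2.le⟩
    rw [hev.deriv_eq]
    simp
  have h1c : ∀ u ∈ Set.Icc (0:ℝ) 1, deriv χ u = 1 := by
    have := (Set.EqOn.closure (fun u hu => h1o u hu) hcont1 continuous_const)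
    intro u hu
    exact this (by rwa [closure_Ioo (by norm_num : (0:ℝ) ≠ 1)] )
  -- deriv (deriv χ) = 0 on [0,1]
  have h2o : ∀ u ∈ Set.Ioo (0:ℝ) 1, deriv (deriv χ) u = 0 := by
    intro u hu
    have hev : deriv χ =ᶠ[𝓝 u] (fun _ => (1:ℝ)) := by
      filter_upwards [isOpen_Ioo.mem_nhds hu] with x hx
      exact h1o x hx
    rw [hev.deriv_eq, deriv_const]
  have h2c : ∀ u ∈ Set.Icc (0:ℝ) 1, deriv (deriv χ) u = 0 := by
    have := (Set.EqOn.closure (fun u hu => h2o u hu) hcont2 continuous_const)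
    intro u hu
    exact this (by rwa [closure_Ioo (by norm_num : (0:ℝ) ≠ 1)])
  -- deriv χ = 0 on [2,∞)
  have h3o : ∀ u ∈ Set.Ioi (2:ℝ), deriv χ u = 0 := by
    intro u hu
    have hev : χ =ᶠ[𝓝 u] (fun _ => (2:ℝ)) := by
      filter_upwards [isOpen_Ioi.mem_nhds hu] with x hx
      exact hχ2 x (le_of_lt hx)
    rw [hev.deriv_eq, deriv_const]
  have h3c : ∀ u : ℝ, 2 ≤ u → deriv χ u = 0 := by
    have := (Set.EqOn.closure (fun u hu => h3o u hu) hcont1 continuous_const)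
    intro u hu
    exact this (by rwa [closure_Ioi])
  have h4o : ∀ u ∈ Set.Ioi (2:ℝ), deriv (deriv χ) u = 0 := by
    intro u hu
    have hev : deriv χ =ᶠ[𝓝 u] (fun _ => (0:ℝ)) := by
      filter_upwards [isOpen_Ioi.mem_nhds hu] with x hx
      exact h3o x hx
    rw [hev.deriv_eq, deriv_const]
  -- bounds on compact [0,2]
  obtain ⟨M₁, hM₁⟩ : ∃ M, ∀ u ∈ Set.Icc (0:ℝ) 2, |deriv χ u| ≤ M := by
    obtain ⟨M, hM⟩ := (isCompact_Icc (a := (0:ℝ)) (b := 2)).exists_bound_of_continuousOn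
      hcont1.continuousOn
    exact ⟨M, fun u hu => by simpa using hM u hu⟩
  obtain ⟨M₂, hM₂⟩ : ∃ M, ∀ u ∈ Set.Icc (0:ℝ) 2, |deriv (deriv χ) u| ≤ M := by
    obtain ⟨M, hM⟩ := (isCompact_Icc (a := (0:ℝ)) (b := 2)).exists_bound_of_continuousOn
      hcont2.continuousOn
    exact ⟨M, fun u hu => by simpa using hM u hu⟩
  have hM₁0 : 0 ≤ M₁ := le_trans (abs_nonneg _) (hM₁ 0 (by norm_num))
  have hM₂0 : 0 ≤ M₂ := le_trans (abs_nonneg _) (hM₂ 0 (by norm_num))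
  refine ⟨4*M₁ + 16*M₂ + 2, ?_⟩
  intro μ hμ ξ
  have hμ0 : μ ≠ 0 := ne_of_gt hμ
  set u := ξ ^ 2 / μ with hu_def
  have hu0 : 0 ≤ u := div_nonneg (sq_nonneg ξ) hμ.le
  have hξ2 : ξ ^ 2 = μ * u := by rw [hu_def]; field_simp
  -- first derivative formula
  have hF' : ∀ t : ℝ, deriv (fun t : ℝ => μ * χ (t ^ 2 / μ)) t = 2 * t * deriv χ (t ^ 2 / μ) := by
    intro t
    have hg : HasDerivAt (fun t : ℝ => t ^ 2 / μ) (2 * t / μ) t := by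
      simpa using (hasDerivAt_pow 2 t).div_const μ
    have h : HasDerivAt (fun t : ℝ => μ * χ (t ^ 2 / μ))
        (μ * (deriv χ (t ^ 2 / μ) * (2 * t / μ))) t := by
      simpa [Function.comp] using ((hdχ (t ^ 2 / μ)).comp t hg).const_mul μ
    rw [h.deriv]
    field_simp
  have hF'fun : deriv (fun t : ℝ => μ * χ (t ^ 2 / μ))
      = fun t : ℝ => 2 * t * deriv χ (t ^ 2 / μ) := funext hF'
  -- second derivative formula
  have hF'' : deriv (deriv (fun t : ℝ => μ * χ (t ^ 2 / μ))) ξ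
      = 2 * deriv χ u + 4 * u * deriv (deriv χ) u := by
    rw [hF'fun]
    have hg : HasDerivAt (fun t : ℝ => t ^ 2 / μ) (2 * ξ / μ) ξ := by
      simpa using (hasDerivAt_pow 2 ξ).div_const μ
    have h1 : HasDerivAt (fun t : ℝ => deriv χ (t ^ 2 / μ))
        (deriv (deriv χ) u * (2 * ξ / μ)) ξ := by
      exact (hdχ2 (ξ ^ 2 / μ)).comp ξ hg
    have h2 : HasDerivAt (fun t : ℝ => 2 * t * deriv χ (t ^ 2 / μ))
        (2 * deriv χ u + 4 * u * deriv (deriv χ) u) ξ := by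
      have h3 := ((hasDerivAt_id ξ).const_mul 2).mul h1
      refine h3.congr_deriv ?_
      simp only [id_eq]
      rw [hu_def]
      field_simp
      ring
    rw [h2.deriv]
  -- positivity/values of χ
  have hχval : ∀ v : ℝ, 0 ≤ v → 0 ≤ χ v := by
    intro v hv
    rcases le_or_gt v 1 with h | h
    · rw [hχid v ⟨hv, h⟩]; exact hv
    · rcases lt_or_ge v 2 with h2 | h2
      · linarith [(hχmid v ⟨h, h2⟩).1]
      · rw [hχ2 v h2]; norm_num
  have hχge1 : ∀ v : ℝ, 1 ≤ v → 1 ≤ χ v := by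
    intro v hv
    rcases lt_or_ge v 2 with h | h
    · rcases eq_or_lt_of_le hv with h1 | h1
      · rw [← h1, hχid 1 (by norm_num)]
      · exact (hχmid v ⟨h1, h⟩).1.le
    · rw [hχ2 v h]; norm_num
  have hχu0 : 0 ≤ χ u := hχval u hu0
  constructor
  · -- part 1
    rw [hF' ξ]
    have hexpr : ξ * (2 * ξ * deriv χ u) - μ * χ u = μ * (2 * u * deriv χ u - χ u) := by
      calc ξ * (2 * ξ * deriv χ u) - μ * χ u
          = 2 * ξ ^ 2 * deriv χ u - μ * χ u := by ring
        _ = 2 * (μ * u) * deriv χ u - μ * χ u := by rw [hξ2]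
        _ = μ * (2 * u * deriv χ u - χ u) := by ring
    rw [hexpr, abs_mul, abs_of_pos hμ]
    rcases le_or_gt u 1 with h | h
    · have e1 : χ u = u := hχid u ⟨hu0, h⟩
      have e2 : deriv χ u = 1 := h1c u ⟨hu0, h⟩
      rw [e1, e2]
      have e3 : |2 * u * 1 - u| = u := by rw [show 2*u*1 - u = u by ring, abs_of_nonneg hu0]
      rw [e3]
      nlinarith [mul_nonneg hμ.le hu0,
        mul_nonneg (mul_nonneg hμ.le hu0) (by linarith : (0:ℝ) ≤ 4*M₁ + 16*M₂ + 1)]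
    · rcases lt_or_ge u 2 with h2 | h2
      · have hb1 : |deriv χ u| ≤ M₁ := hM₁ u ⟨hu0, h2.le⟩
        have hb2 : χ u < 2 := (hχmid u ⟨h, h2⟩).2
        have hb3 : 1 ≤ χ u := hχge1 u h.le
        have key : |2 * u * deriv χ u - χ u| ≤ 4 * M₁ + 2 := by
          have h4 : |2 * u * deriv χ u| ≤ 4 * M₁ := by
            rw [abs_mul, abs_of_nonneg (by linarith : (0:ℝ) ≤ 2*u)]
            nlinarith [abs_nonneg (deriv χ u)]
          calc |2 * u * deriv χ u - χ u| ≤ |2 * u * deriv χ u| + |χ u| := abs_sub _ _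
            _ ≤ 4 * M₁ + 2 := by rw [abs_of_nonneg hχu0]; linarith
        calc μ * |2 * u * deriv χ u - χ u| ≤ μ * (4 * M₁ + 2) :=
              mul_le_mul_of_nonneg_left key hμ.le
          _ ≤ (4*M₁ + 16*M₂ + 2) * (μ * χ u) := by
              nlinarith [mul_nonneg hμ.le (mul_nonneg (by linarith : (0:ℝ) ≤ 4*M₁+2)
                  (by linarith : (0:ℝ) ≤ χ u - 1)),
                mul_nonneg hμ.le (mul_nonneg hM₂0 hχu0)]
      · have e1 : deriv χ u = 0 := h3c u h2
        have e2 : χ u = 2 := hχ2 u h2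
        rw [e1, e2]
        have e3 : |2 * u * 0 - 2| = 2 := by norm_num
        rw [e3]
        nlinarith [mul_nonneg hμ.le (by linarith : (0:ℝ) ≤ 4*M₁+16*M₂+1)]
  refine ⟨?_, ?_, ?_⟩
  · -- part 2 : |ξ| ≤ √μ, so u ≤ 1
    intro hle
    have hu1 : u ≤ 1 := by
      have h1 : ξ ^ 2 ≤ μ := by
        rw [← sq_abs]
        calc |ξ| ^ 2 ≤ Real.sqrt μ ^ 2 := pow_le_pow_left₀ (abs_nonneg ξ) hle 2
          _ = μ := Real.sq_sqrt hμ.le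
      rw [hu_def, div_le_one hμ]; exact h1
    rw [hF'']
    have e1 : deriv χ u = 1 := h1c u ⟨hu0, hu1⟩
    have e2 : deriv (deriv χ) u = 0 := h2c u ⟨hu0, hu1⟩
    have e3 : χ u = u := hχid u ⟨hu0, hu1⟩
    rw [e1, e2, e3]
    have e4 : ξ ^ 2 * (2 * 1 + 4 * u * 0) = 2 * (μ * u) := by rw [hξ2]; ring
    rw [e4, abs_of_nonneg (by positivity)]
    nlinarith [mul_nonneg (mul_nonneg hμ.le hu0) (by linarith : (0:ℝ) ≤ 4*M₁+16*M₂)]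
  · -- part 3 : 1 ≤ u ≤ 2
    intro hge hle
    have hu1 : 1 ≤ u := by
      have h1 : μ ≤ ξ ^ 2 := by
        rw [← sq_abs]
        calc μ = Real.sqrt μ ^ 2 := (Real.sq_sqrt hμ.le).symm
          _ ≤ |ξ| ^ 2 := pow_le_pow_left₀ (Real.sqrt_nonneg μ) hge 2
      rw [hu_def, le_div_iff₀ hμ]; linarith
    have hu2 : u ≤ 2 := by
      have h1 : ξ ^ 2 ≤ 2 * μ := by
        rw [← sq_abs]
        calc |ξ| ^ 2 ≤ Real.sqrt (2*μ) ^ 2 := pow_le_pow_left₀ (abs_nonneg ξ) hle 2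
          _ = 2 * μ := Real.sq_sqrt (by linarith)
      rw [hu_def, div_le_iff₀ hμ]; linarith
    rw [hF'']
    have hb1 : |deriv χ u| ≤ M₁ := hM₁ u ⟨hu0, hu2⟩
    have hb2 : |deriv (deriv χ) u| ≤ M₂ := hM₂ u ⟨hu0, hu2⟩
    have key : |2 * deriv χ u + 4 * u * deriv (deriv χ) u| ≤ 2 * M₁ + 8 * M₂ := by
      calc |2 * deriv χ u + 4 * u * deriv (deriv χ) u|
          ≤ |2 * deriv χ u| + |4 * u * deriv (deriv χ) u| := abs_add_le _ _
        _ ≤ 2 * M₁ + 8 * M₂ := by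
            have e1 : |2 * deriv χ u| = 2 * |deriv χ u| := by
              rw [abs_mul, abs_of_nonneg (by norm_num : (0:ℝ) ≤ 2)]
            have e2 : |4 * u * deriv (deriv χ) u| = 4 * u * |deriv (deriv χ) u| := by
              rw [abs_mul, abs_of_nonneg (by linarith : (0:ℝ) ≤ 4*u)]
            rw [e1, e2]
            nlinarith [abs_nonneg (deriv (deriv χ) u)]
    rw [abs_mul, abs_of_nonneg (sq_nonneg ξ)]
    calc ξ ^ 2 * |2 * deriv χ u + 4 * u * deriv (deriv χ) u|
        ≤ ξ ^ 2 * (2 * M₁ + 8 * M₂) := mul_le_mul_of_nonneg_left key (sq_nonneg ξ)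
      _ ≤ (4*M₁ + 16*M₂ + 2) * ξ ^ 2 := by
          nlinarith [mul_nonneg (sq_nonneg ξ) (by linarith : (0:ℝ) ≤ 2*M₁ + 8*M₂ + 2)]
  · -- part 4 : u > 2
    intro hgt
    have hu2 : 2 < u := by
      have h1 : 2 * μ < ξ ^ 2 := by
        rw [← sq_abs]
        calc 2 * μ = Real.sqrt (2*μ) ^ 2 := (Real.sq_sqrt (by linarith)).symm
          _ < |ξ| ^ 2 := by
            apply pow_lt_pow_left₀ hgt (Real.sqrt_nonneg _) (by norm_num)
      rw [hu_def, lt_div_iff₀ hμ]; linarith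
    rw [hF'', h3o u hu2, h4o u hu2]
    ring
end
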